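/- If two points λ₁, λ₂ ∈ ℝ^p lie in the same connected component of the complement of the union of all separating hyperplanes, then the (unique) minimum weight basis at λ₁ equals the (unique) minimum weight basis at λ₂. -/

import Mathlib

open Set

section Aux

variable {α : Type*} [Fintype α] (M : Matroid α)

private lemma wt_finset (w : α → ℝ) (s : Set α) :
    ∑ᶠ e ∈ s, w e = ∑ e ∈ (Set.toFinite s).toFinset, w e := by
  rw [← finsum_mem_coe_finset, Set.Finite.coe_toFinset]

/-- swap computation : weight of `insert y (B' \ {g})` -/
private lemma wt_swap (w : α → ℝ) {B' : Set α} {y g : α} (hy : y ∉ B') (hg : g ∈ B') :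
    ∑ᶠ e ∈ insert y (B' \ {g}), w e = w y + ((∑ᶠ e ∈ B', w e) - w g) := by
  classical
  rw [wt_finset, wt_finset]
  have hset : (Set.toFinite (insert y (B' \ {g}))).toFinset
      = insert y ((Set.toFinite B').toFinset.erase g) := by
    ext x
    simp only [Set.Finite.mem_toFinset, Set.mem_insert_iff, Set.mem_diff,
      Set.mem_singleton_iff, Finset.mem_insert, Finset.mem_erase]
    tauto
  rw [hset, Finset.sum_insert (by simp only [Finset.mem_erase, Set.Finite.mem_toFinset]; exact fun h => hy h.2), Finset.sum_erase_eq_sub (by simpa using hg)]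

private lemma aux_no_improve (w : α → ℝ) {B B' : Set α} (hB : M.IsBase B) (hB' : M.IsBase B')
    (hmin' : ∀ C, M.IsBase C → ∑ᶠ e ∈ B', w e ≤ ∑ᶠ e ∈ C, w e)
    {g : α} (hg : g ∈ B' \ B) (hlt : ∀ y ∈ B \ B', w y < w g) : False := by
  obtain ⟨y, hy, hBy⟩ := hB'.exchange hB hg
  have h1 := hmin' _ hBy
  rw [wt_swap w hy.2 hg.1] at h1
  have := hlt y hy
  linarith

private lemma unique_min_basis (w : α → ℝ) (hw : ∀ e f : α, e ≠ f → w e ≠ w f)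
    {B B' : Set α} (hB : M.IsBase B) (hB' : M.IsBase B')
    (hmin : ∀ C, M.IsBase C → ∑ᶠ e ∈ B, w e ≤ ∑ᶠ e ∈ C, w e)
    (hmin' : ∀ C, M.IsBase C → ∑ᶠ e ∈ B', w e ≤ ∑ᶠ e ∈ C, w e) : B = B' := by
  by_contra hne
  set D : Set α := (B \ B') ∪ (B' \ B) with hD
  have hDne : D.Nonempty := by
    rw [Set.nonempty_iff_ne_empty]
    intro h
    rw [hD, Set.union_empty_iff, Set.diff_eq_empty, Set.diff_eq_empty] at h
    exact hne (Set.Subset.antisymm h.1 h.2)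
  obtain ⟨g, hgD, hgmax⟩ := Set.exists_max_image D w (Set.toFinite D) hDne
  have hlt : ∀ {s t : Set α}, g ∈ t \ s → ∀ y ∈ s \ t, y ∈ D → w y < w g := by
    intro s t hgt y hy hyD
    have hne' : y ≠ g := fun h => hgt.2 (h ▸ hy.1)
    exact lt_of_le_of_ne (hgmax y hyD) (hw y g hne')
  rcases hgD with hgB | hgB'
  · exact aux_no_improve M w hB' hB hmin hgB
      (fun y hy => hlt hgB y hy (Or.inr hy))
  · exact aux_no_improve M w hB hB' hmin' hgB'
      (fun y hy => hlt hgB' y hy (Or.inl hy))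

end Aux

private lemma cont_wt {α : Type*} [Fintype α] {p : ℕ} (a : α → ℝ) (b : α → Fin p → ℝ)
    (B : Set α) :
    Continuous (fun lam : Fin p → ℝ => ∑ᶠ e ∈ B, (a e + ∑ i, lam i * b e i)) := by
  have : (fun lam : Fin p → ℝ => ∑ᶠ e ∈ B, (a e + ∑ i, lam i * b e i))
      = fun lam => ∑ e ∈ (Set.toFinite B).toFinset, (a e + ∑ i, lam i * b e i) := by
    funext lam
    exact wt_finset _ B
  rw [this]
  refine continuous_finset_sum _ fun e _ => Continuous.add continuous_const ?_
  exact continuous_finset_sum _ fun i _ => (continuous_apply i).mul continuous_const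

/-- If `λ₁` and `λ₂` lie in the same connected component of the complement of the
union of all separating hyperplanes, then the minimum weight bases at `λ₁` and at
`λ₂` coincide. -/
theorem same_cell_same_min_basis {α : Type*} [Fintype α] (M : Matroid α)
    (hM : ∃ B, M.IsBase B) {p : ℕ} (a : α → ℝ) (b : α → Fin p → ℝ)
    (lam₁ lam₂ : Fin p → ℝ)
    (h₁ : lam₁ ∈ {lam : Fin p → ℝ | ∀ e f : α, e ≠ f →
      (a e + ∑ i, lam i * b e i) ≠ (a f + ∑ i, lam i * b f i)})
    (h₂ : lam₂ ∈ connectedComponentIn {lam : Fin p → ℝ | ∀ e f : α, e ≠ f →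
      (a e + ∑ i, lam i * b e i) ≠ (a f + ∑ i, lam i * b f i)} lam₁) :
    ∀ B, M.IsBase B →
      ((∀ B', M.IsBase B' → (∑ᶠ e ∈ B, (a e + ∑ i, lam₁ i * b e i)) ≤
          ∑ᶠ e ∈ B', (a e + ∑ i, lam₁ i * b e i)) ↔
       (∀ B', M.IsBase B' → (∑ᶠ e ∈ B, (a e + ∑ i, lam₂ i * b e i)) ≤
          ∑ᶠ e ∈ B', (a e + ∑ i, lam₂ i * b e i))) := by
  classical
  set S : Set (Fin p → ℝ) := {lam : Fin p → ℝ | ∀ e f : α, e ≠ f →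
      (a e + ∑ i, lam i * b e i) ≠ (a f + ∑ i, lam i * b f i)} with hS
  set W : (Fin p → ℝ) → Set α → ℝ :=
    fun lam B => ∑ᶠ e ∈ B, (a e + ∑ i, lam i * b e i) with hW
  set C : Set (Fin p → ℝ) := connectedComponentIn S lam₁ with hC
  -- for each basis B, the open set where B is the strict minimum
  set U : Set α → Set (Fin p → ℝ) :=
    fun B => {lam | ∀ B', M.IsBase B' → B' ≠ B → W lam B < W lam B'} with hU
  have hUopen : ∀ B : Set α, IsOpen (U B) := by
    intro B
    have : U B = ⋂ B' ∈ {B' : Set α | M.IsBase B' ∧ B' ≠ B}, {lam | W lam B < W lam B'} := by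
      ext lam
      simp only [hU, Set.mem_setOf_eq, Set.mem_iInter]
      constructor
      · intro h B' hB'; exact h B' hB'.1 hB'.2
      · intro h B' h1 h2; exact h B' ⟨h1, h2⟩
    rw [this]
    exact (Set.toFinite _).isOpen_biInter fun B' _ =>
      isOpen_lt (cont_wt a b B) (cont_wt a b B')
  -- at any point of S, the minimum basis exists and is a strict minimum
  have hexists : ∀ lam ∈ S, ∃ B, M.IsBase B ∧ lam ∈ U B ∧
      ∀ B', M.IsBase B' → W lam B ≤ W lam B' := by
    intro lam hlam
    obtain ⟨B, hB, hBmax⟩ := Set.exists_max_image {B : Set α | M.IsBase B}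
      (fun B => -W lam B) (Set.toFinite _) hM
    have hmin : ∀ B', M.IsBase B' → W lam B ≤ W lam B' := by
      intro B' hB'
      have := hBmax B' hB'
      simpa using this
    refine ⟨B, hB, fun B' hB' hne => ?_, hmin⟩
    refine lt_of_le_of_ne (hmin B' hB') fun heq => ?_
    have hmin' : ∀ C', M.IsBase C' → W lam B' ≤ W lam C' := fun C' hC' =>
      heq ▸ hmin C' hC'
    exact hne (unique_min_basis M _ (fun e f hef => hlam e f hef) hB' hB hmin' hmin)
  -- pick the minimum basis B₀ at lam₁
  obtain ⟨B₀, hB₀, hU₀, hmin₀⟩ := hexists lam₁ h₁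
  -- the component C is covered by U B₀ and the union of the others
  have hCpre : IsPreconnected C := isPreconnected_connectedComponentIn
  have hCS : C ⊆ S := connectedComponentIn_subset S lam₁
  have hlam₁C : lam₁ ∈ C := mem_connectedComponentIn h₁
  set V : Set (Fin p → ℝ) := ⋃ B ∈ {B : Set α | M.IsBase B ∧ B ≠ B₀}, U B with hV
  have hVopen : IsOpen V := isOpen_biUnion fun B _ => hUopen B
  have hdisj : Disjoint (U B₀) V := by
    rw [Set.disjoint_left]
    intro lam h0 hv
    obtain ⟨B, hB, hBU⟩ := by
      simpa only [hV, Set.mem_iUnion, exists_prop] using hv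
    have h1 : W lam B₀ < W lam B := h0 B hB.1 hB.2
    have h2 : W lam B < W lam B₀ := hBU B₀ hB₀ (Ne.symm hB.2)
    linarith
  have hcover : C ⊆ U B₀ ∪ V := by
    intro lam hlam
    obtain ⟨B, hB, hBU, _⟩ := hexists lam (hCS hlam)
    by_cases hBe : B = B₀
    · exact Or.inl (hBe ▸ hBU)
    · exact Or.inr (Set.mem_biUnion ⟨hB, hBe⟩ hBU)
  have hCU : C ⊆ U B₀ :=
    hCpre.subset_left_of_subset_union (hUopen B₀) hVopen hdisj hcover ⟨lam₁, hlam₁C, hU₀⟩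
  -- hence B₀ is the strict minimum at lam₂ as well
  have hU₂ : lam₂ ∈ U B₀ := hCU h₂
  have hS₂ : lam₂ ∈ S := hCS h₂
  have hmin₂ : ∀ B', M.IsBase B' → W lam₂ B₀ ≤ W lam₂ B' := by
    intro B' hB'
    by_cases h : B' = B₀
    · exact h ▸ le_refl _
    · exact (hU₂ B' hB' h).le
  intro B hB
  constructor
  · intro hmin B' hB'
    have : B = B₀ := unique_min_basis M _ (fun e f hef => h₁ e f hef) hB hB₀ hmin hmin₀
    exact this ▸ hmin₂ B' hB'
  · intro hmin B' hB'
    have : B = B₀ := unique_min_basis M _ (fun e f hef => hS₂ e f hef) hB hB₀ hmin hmin₂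
    exact this ▸ hmin₀ B' hB'
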